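/- Let G be a finite group generated by elements g₁,…,g_m. Then every element of G can be computed from g₁,…,g_m by a straight-line program of length at most (1 + log₂|G|)². -/

import Mathlib

/-- An entry of a straight-line program over the group operations, with
generators indexed by `Fin m`. Non-generator entries refer to earlier
positions of the program by natural-number indices. -/
inductive GEntry (m : ℕ) where
  | gen : Fin m → GEntry m
  | mul : ℕ → ℕ → GEntry m
  | inv : ℕ → GEntry m
  | one : GEntry m

/-- The list of positions referenced by an entry. -/
def GEntry.refs {m : ℕ} : GEntry m → List ℕ
  | .gen _ => []
  | .mul i j => [i, j]
  | .inv i => [i]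
  | .one => []

/-- One step of evaluation: the value of an entry, given the generators `g`
and the list `acc` of previously computed values. -/
def GEntry.step {G : Type} [Group G] {m : ℕ} (g : Fin m → G) (acc : List G) :
    GEntry m → G
  | .gen i => g i
  | .mul i j => acc.getD i 1 * acc.getD j 1
  | .inv i => (acc.getD i 1)⁻¹
  | .one => 1

/-- The sequence of elements of `G` computed by a straight-line program. -/
def runSLP {G : Type} [Group G] {m : ℕ} (g : Fin m → G) (L : List (GEntry m)) :
    List G :=
  L.foldl (fun acc u => acc ++ [GEntry.step g acc u]) []

/-- A straight-line program is valid if every entry refers only to strictly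
earlier positions. -/
def ValidSLP {m : ℕ} (L : List (GEntry m)) : Prop :=
  ∀ (i : ℕ) (hi : i < L.length), ∀ j ∈ (L.get ⟨i, hi⟩).refs, j < i

namespace Reach

variable {G : Type} [Group G] {m : ℕ} (g : Fin m → G)

lemma runSLP_concat (L : List (GEntry m)) (e : GEntry m) :
    runSLP g (L ++ [e]) = runSLP g L ++ [e.step g (runSLP g L)] := by
  simp [runSLP, List.foldl_append]

lemma length_runSLP (L : List (GEntry m)) : (runSLP g L).length = L.length := by
  induction L using List.reverseRecOn with
  | nil => rfl
  | append_singleton L e ih => rw [runSLP_concat]; simp [ih]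

lemma runSLP_prefix {L L' : List (GEntry m)} (h : L <+: L') :
    runSLP g L <+: runSLP g L' := by
  obtain ⟨t, rfl⟩ := h
  induction t using List.reverseRecOn with
  | nil => simp
  | append_singleton t e ih =>
    rw [← List.append_assoc, runSLP_concat]
    exact ih.trans (List.prefix_append _ _)

/-- value computed at position `k`. -/
def val (L : List (GEntry m)) (k : ℕ) : G := (runSLP g L).getD k 1

lemma val_stable {L L' : List (GEntry m)} (h : L <+: L') {k : ℕ}
    (hk : k < L.length) : val g L' k = val g L k := by
  have hp := runSLP_prefix g h
  have hk' : k < (runSLP g L).length := by rwa [length_runSLP]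
  have hk'' : k < (runSLP g L').length :=
    lt_of_lt_of_le hk' hp.length_le
  rw [val, val, List.getD_eq_getElem _ _ hk'', List.getD_eq_getElem _ _ hk',
    hp.getElem hk']

lemma map_val_stable {L L' : List (GEntry m)} (h : L <+: L') {hs : List ℕ}
    (hhs : ∀ k ∈ hs, k < L.length) :
    hs.map (val g L') = hs.map (val g L) :=
  List.map_congr_left fun k hk => val_stable g h (hhs k hk)

lemma valid_concat {L : List (GEntry m)} (hL : ValidSLP L) {e : GEntry m}
    (he : ∀ j ∈ e.refs, j < L.length) : ValidSLP (L ++ [e]) := by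
  intro i hi j hj
  rcases lt_or_ge i L.length with h | h
  · have : (L ++ [e]).get ⟨i, hi⟩ = L.get ⟨i, h⟩ := by
      simp [List.get_eq_getElem, List.getElem_append_left h]
    rw [this] at hj
    exact hL i h j hj
  · have hieq : i = L.length := by
      have := hi; simp at this; omega
    have : (L ++ [e]).get ⟨i, hi⟩ = e := by
      simp [List.get_eq_getElem]
      exact List.getElem_concat_length hieq hi
    rw [this] at hj
    exact hieq ▸ he j hj

lemma val_concat (L : List (GEntry m)) (e : GEntry m) :
    val g (L ++ [e]) L.length = e.step g (runSLP g L) := by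
  rw [val, runSLP_concat]
  have h1 : L.length = (runSLP g L).length := (length_runSLP g L).symm
  have h2 : L.length < (runSLP g L ++ [e.step g (runSLP g L)]).length := by
    simp [length_runSLP]
  rw [List.getD_eq_getElem _ _ h2]
  exact List.getElem_concat_length h1 h2

lemma val_concat_mul (L : List (GEntry m)) (p q : ℕ) :
    val g (L ++ [GEntry.mul p q]) L.length = val g L p * val g L q := val_concat g L _

lemma val_concat_inv (L : List (GEntry m)) (p : ℕ) :
    val g (L ++ [GEntry.inv p]) L.length = (val g L p)⁻¹ := val_concat g L _

lemma val_concat_gen (L : List (GEntry m)) (j : Fin m) :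
    val g (L ++ [GEntry.gen j]) L.length = g j := val_concat g L _

lemma val_concat_one (L : List (GEntry m)) :
    val g (L ++ [GEntry.one]) L.length = 1 := val_concat g L _

end Reach

namespace Reach

variable {G : Type} [Group G] {m : ℕ} (g : Fin m → G)

/-- build product of `k` with positions `js` by successive multiplications. -/
def mkProd (L : List (GEntry m)) (k : ℕ) : List ℕ → List (GEntry m) × ℕ
  | [] => (L, k)
  | j :: js => mkProd (L ++ [GEntry.mul k j]) L.length js

lemma mkProd_spec : ∀ (js : List ℕ) (L : List (GEntry m)) (k : ℕ),
    ValidSLP L → k < L.length → (∀ j ∈ js, j < L.length) →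
    L <+: (mkProd L k js).1 ∧ ValidSLP (mkProd L k js).1 ∧
    (mkProd L k js).1.length = L.length + js.length ∧
    (mkProd L k js).2 < (mkProd L k js).1.length ∧
    val g (mkProd L k js).1 (mkProd L k js).2
      = val g L k * (js.map (val g L)).prod := by
  intro js
  induction js with
  | nil => intro L k hL hk _; exact ⟨List.prefix_refl _, hL, by simp [mkProd], by simpa [mkProd], by simp [mkProd]⟩
  | cons j js ih =>
    intro L k hL hk hjs
    have hj : j < L.length := hjs j (by simp)
    set L1 := L ++ [GEntry.mul k j] with hL1
    have hpre1 : L <+: L1 := List.prefix_append _ _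
    have hL1v : ValidSLP L1 := valid_concat hL (by
      intro x hx; simp [GEntry.refs] at hx; rcases hx with rfl | rfl <;> assumption)
    have hlen1 : L1.length = L.length + 1 := by simp [hL1]
    have hvnew : val g L1 L.length = val g L k * val g L j := val_concat_mul g L k j
    have hrec := ih L1 L.length hL1v (by simp [hL1]) (by
      intro x hx; have := hjs x (by simp [hx]); omega)
    have heq : mkProd L k (j :: js) = mkProd L1 L.length js := rfl
    rw [heq]
    refine ⟨hpre1.trans hrec.1, hrec.2.1, by rw [hrec.2.2.1, hlen1, List.length_cons]; omega, hrec.2.2.2.1, ?_⟩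
    rw [hrec.2.2.2.2, hvnew]
    have hmap : js.map (val g L1) = js.map (val g L) := map_val_stable g hpre1 (by
      intro x hx; exact hjs x (by simp [hx]))
    rw [hmap, List.map_cons, List.prod_cons, mul_assoc]

/-- build the product of a nonempty list of positions. -/
lemma build_prod {L : List (GEntry m)} (hL : ValidSLP L) {ps : List ℕ}
    (hps : ∀ k ∈ ps, k < L.length) (hne : ps ≠ []) :
    ∃ (L' : List (GEntry m)) (r : ℕ), L <+: L' ∧ ValidSLP L' ∧
      L'.length = L.length + (ps.length - 1) ∧ r < L'.length ∧
      val g L' r = (ps.map (val g L)).prod := by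
  obtain ⟨k, ks, rfl⟩ := List.exists_cons_of_ne_nil hne
  have h := mkProd_spec g ks L k hL (hps k (by simp)) (fun j hj => hps j (by simp [hj]))
  exact ⟨_, _, h.1, h.2.1, by rw [h.2.2.1]; simp, h.2.2.2.1, by
    rw [h.2.2.2.2]; simp⟩

end Reach

namespace Reach
open List

variable {G : Type} [Group G] [DecidableEq G] {m : ℕ} (g : Fin m → G)

def cube : List G → Finset G
  | [] => {1}
  | a :: t => cube t ∪ (cube t).image (a * ·)

lemma mem_cube_iff {l : List G} {x : G} :
    x ∈ cube l ↔ ∃ s : List G, s <+ l ∧ s.prod = x := by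
  induction l generalizing x with
  | nil =>
    simp only [cube, Finset.mem_singleton]
    constructor
    · rintro rfl; exact ⟨[], List.Sublist.refl _, rfl⟩
    · rintro ⟨s, hs, rfl⟩; simp [List.sublist_nil.mp hs]
  | cons a t ih =>
    simp only [cube, Finset.mem_union, Finset.mem_image]
    constructor
    · rintro (hx | ⟨y, hy, rfl⟩)
      · obtain ⟨s, hs, rfl⟩ := ih.mp hx
        exact ⟨s, hs.cons a, rfl⟩
      · obtain ⟨s, hs, rfl⟩ := ih.mp hy
        exact ⟨a :: s, hs.cons₂ a, by simp⟩
    · rintro ⟨s, hs, rfl⟩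
      cases hs with
      | cons _ hs' => exact Or.inl (ih.mpr ⟨s, hs', rfl⟩)
      | cons_cons _ hs' =>
        exact Or.inr ⟨_, ih.mpr ⟨_, hs', rfl⟩, by simp⟩

lemma one_mem_cube (l : List G) : (1 : G) ∈ cube l :=
  mem_cube_iff.mpr ⟨[], List.nil_sublist _, rfl⟩

lemma cube_append (l : List G) (z : G) :
    cube (l ++ [z]) = cube l ∪ (cube l).image (· * z) := by
  ext x
  simp only [mem_cube_iff, Finset.mem_union, Finset.mem_image]
  constructor
  · rintro ⟨s, hs, rfl⟩
    rcases List.sublist_append_iff.mp hs with ⟨s1, s2, rfl, h1, h2⟩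
    rcases List.sublist_singleton.mp h2 with rfl | rfl
    · exact Or.inl ⟨s1, h1, by simp⟩
    · exact Or.inr ⟨s1.prod, ⟨s1, h1, rfl⟩, by simp⟩
  · rintro (⟨s, hs, rfl⟩ | ⟨y, ⟨s, hs, rfl⟩, rfl⟩)
    · exact ⟨s, hs.trans (List.prefix_append _ _).sublist, rfl⟩
    · exact ⟨s ++ [z], List.Sublist.append hs (List.Sublist.refl _), by simp⟩

end Reach

namespace Reach
open List Pointwise

variable {G : Type} [Group G] [DecidableEq G] {m : ℕ} (g : Fin m → G)

lemma cube_double {l : List G} {z : G} (hz : z ∉ (cube l)⁻¹ * cube l) :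
    2 * (cube l).card ≤ (cube (l ++ [z])).card := by
  rw [cube_append]
  have hdisj : Disjoint (cube l) ((cube l).image (· * z)) := by
    rw [Finset.disjoint_right]
    rintro x hx hx'
    obtain ⟨y, hy, rfl⟩ := Finset.mem_image.mp hx
    exact hz (Finset.mem_mul.mpr ⟨y⁻¹, Finset.mem_inv.mpr ⟨y, hy, rfl⟩, y * z,
      hx', by group⟩)
  rw [Finset.card_union_of_disjoint hdisj,
    Finset.card_image_of_injective _ (mul_left_injective z)]
  omega

lemma quot_univ [Finite G] (hgen : Subgroup.closure (Set.range g) = ⊤)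
    {K : Finset G} (h1 : (1 : G) ∈ K)
    (hcl : ∀ (j : Fin m), ∀ d ∈ K⁻¹ * K, d * g j ∈ K⁻¹ * K) :
    ∀ x : G, x ∈ K⁻¹ * K := by
  have h1q : (1 : G) ∈ K⁻¹ * K :=
    Finset.mem_mul.mpr ⟨1, Finset.mem_inv.mpr ⟨1, h1, by simp⟩, 1, h1, by simp⟩
  have key : ∀ (l : List G), (∀ y ∈ l, y ∈ Set.range g) → ∀ c ∈ K⁻¹ * K,
      c * l.prod ∈ K⁻¹ * K := by
    intro l
    induction l with
    | nil => intro _ c hc; simpa using hc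
    | cons a t ih =>
      rintro hmem c hc
      obtain ⟨j, rfl⟩ := hmem a (by simp)
      have : c * g j ∈ K⁻¹ * K := hcl j c hc
      have := ih (fun y hy => hmem y (by simp [hy])) _ this
      simpa [mul_assoc] using this
  -- every x lies in the submonoid closure of the generators
  have hM : ∀ x : G, x ∈ Submonoid.closure (Set.range g) := by
    intro x
    set M := Submonoid.closure (Set.range g) with hMdef
    have hinv : ∀ y : G, y ∈ M → y⁻¹ ∈ M := by
      intro y hy
      have ho : 0 < orderOf y := orderOf_pos y
      have : y ^ (orderOf y - 1) ∈ M := pow_mem hy _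
      have hyy : y ^ (orderOf y - 1) * y = 1 := by
        rw [← pow_succ]
        have : orderOf y - 1 + 1 = orderOf y := by omega
        rw [this, pow_orderOf_eq_one]
      have : y⁻¹ = y ^ (orderOf y - 1) := by
        exact (mul_eq_one_iff_eq_inv.mp hyy).symm
      rw [this]
      exact pow_mem hy _
    let H : Subgroup G :=
      { carrier := M
        mul_mem' := fun ha hb => M.mul_mem ha hb
        one_mem' := M.one_mem
        inv_mem' := fun ha => hinv _ ha }
    have hle : Subgroup.closure (Set.range g) ≤ H :=
      (Subgroup.closure_le H).mpr Submonoid.subset_closure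
    have : x ∈ Subgroup.closure (Set.range g) := by rw [hgen]; trivial
    exact hle this
  intro x
  obtain ⟨l, hl, rfl⟩ := Submonoid.exists_list_of_mem_closure (hM x)
  simpa using key l hl 1 h1q

/-- Cancellation of common leading elements in a quotient of two
subset-products. -/
lemma cancel (v : ℕ → G) : ∀ (l α β : List ℕ), α <+ l → β <+ l →
    ∃ α' β' : List ℕ, α' <+ l ∧ β' <+ l ∧
      ((α.map v).prod)⁻¹ * (β.map v).prod
        = ((α'.map v).prod)⁻¹ * (β'.map v).prod ∧
      (α' = [] ∨ β' = [] ∨ α'.length + β'.length + 1 ≤ 2 * l.length) := by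
  intro l
  induction l with
  | nil =>
    intro α β ha hb
    exact ⟨α, β, ha, hb, rfl, Or.inl (List.sublist_nil.mp ha)⟩
  | cons a t ih =>
    intro α β ha hb
    rcases List.sublist_cons_iff.mp ha with ha' | ⟨α₁, rfl, ha'⟩
    · rcases List.sublist_cons_iff.mp hb with hb' | ⟨β₁, rfl, hb'⟩
      · obtain ⟨α', β', h1, h2, h3, h4⟩ := ih α β ha' hb'
        refine ⟨α', β', h1.cons a, h2.cons a, h3, ?_⟩
        rcases h4 with h | h | h
        · exact Or.inl h
        · exact Or.inr (Or.inl h)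
        · exact Or.inr (Or.inr (by simp; omega))
      · refine ⟨α, a :: β₁, ha'.cons a, hb'.cons₂ a, rfl, Or.inr (Or.inr ?_)⟩
        have h1 := ha'.length_le
        have h2 := hb'.length_le
        simp; omega
    · rcases List.sublist_cons_iff.mp hb with hb' | ⟨β₁, rfl, hb'⟩
      · refine ⟨a :: α₁, β, ha'.cons₂ a, hb'.cons a, rfl, Or.inr (Or.inr ?_)⟩
        have h1 := ha'.length_le
        have h2 := hb'.length_le
        simp; omega
      · obtain ⟨α', β', h1, h2, h3, h4⟩ := ih _ _ ha' hb'
        refine ⟨α', β', h1.cons a, h2.cons a, ?_, ?_⟩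
        · rw [← h3]
          simp [mul_assoc, mul_inv_rev]
        · rcases h4 with h | h | h
          · exact Or.inl h
          · exact Or.inr (Or.inl h)
          · exact Or.inr (Or.inr (by simp; omega))

end Reach

namespace Reach
open List

variable {G : Type} [Group G] {m : ℕ} (g : Fin m → G)

/-- Build, on top of `L`, an entry whose value is `A⁻¹ * B * g j`, where
`A`, `B` are the products over position-sublists `α`, `β` of `hs`.  The cost
is at most `2 * hs.length + 1` new entries. -/
lemma build_witness {L : List (GEntry m)} (hL : ValidSLP L) {hs : List ℕ}
    (hhs : ∀ k ∈ hs, k < L.length) {α β : List ℕ}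
    (ha : α <+ hs) (hb : β <+ hs) (j : Fin m)
    (hgood : α = [] ∨ β = [] ∨ α.length + β.length + 1 ≤ 2 * hs.length) :
    ∃ (L' : List (GEntry m)), L <+: L' ∧ ValidSLP L' ∧ L' ≠ [] ∧
      val g L' (L'.length - 1)
        = ((α.map (val g L)).prod)⁻¹ * (β.map (val g L)).prod * g j ∧
      L'.length ≤ L.length + (2 * hs.length + 1) := by
  have hmema : ∀ k ∈ α, k < L.length := fun k hk => hhs k (ha.subset hk)
  have hmemb : ∀ k ∈ β, k < L.length := fun k hk => hhs k (hb.subset hk)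
  have hlena := ha.length_le
  have hlenb := hb.length_le
  rcases eq_or_ne α [] with rfl | hane
  · rcases eq_or_ne β [] with rfl | hbne
    · -- z = g j
      refine ⟨L ++ [GEntry.gen j], List.prefix_append _ _,
        valid_concat hL (by simp [GEntry.refs]), by simp, ?_, by simp⟩
      have : (L ++ [GEntry.gen j]).length - 1 = L.length := by simp
      rw [this, val_concat_gen]
      simp
    · -- z = B * g j
      obtain ⟨L1, r, hpre1, hv1, hlen1, hr1, hval1⟩ := build_prod g hL hmemb hbne
      set L2 := L1 ++ [GEntry.gen j] with hL2
      have hv2 : ValidSLP L2 := valid_concat hv1 (by simp [GEntry.refs])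
      set L3 := L2 ++ [GEntry.mul r L1.length] with hL3
      have hv3 : ValidSLP L3 := valid_concat hv2 (by
        intro x hx; simp [GEntry.refs] at hx
        rcases hx with rfl | rfl <;> simp [hL2] <;> omega)
      refine ⟨L3, (hpre1.trans (List.prefix_append _ _)).trans
        (List.prefix_append _ _), hv3, by simp [hL3], ?_, ?_⟩
      · have h3 : L3.length - 1 = L2.length := by simp [hL3, hL2]
        rw [h3, hL3, val_concat_mul]
        have e1 : val g L2 r = (β.map (val g L)).prod := by
          rw [val_stable g (List.prefix_append _ _) hr1, hval1]
        have e2 : val g L2 L1.length = g j := val_concat_gen g L1 j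
        rw [e1, e2]
        simp
      · have hb1 : (1:ℕ) ≤ β.length := by
          rcases β with _ | _; · simp at hbne
          · simp
        simp [hL3, hL2, hlen1]
        omega
  · rcases eq_or_ne β [] with rfl | hbne
    · -- z = A⁻¹ * g j
      obtain ⟨L1, r, hpre1, hv1, hlen1, hr1, hval1⟩ := build_prod g hL hmema hane
      set L2 := L1 ++ [GEntry.inv r] with hL2
      have hv2 : ValidSLP L2 := valid_concat hv1 (by simpa [GEntry.refs])
      set L3 := L2 ++ [GEntry.gen j] with hL3
      have hv3 : ValidSLP L3 := valid_concat hv2 (by simp [GEntry.refs])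
      set L4 := L3 ++ [GEntry.mul L1.length L2.length] with hL4
      have hv4 : ValidSLP L4 := valid_concat hv3 (by
        intro x hx; simp [GEntry.refs] at hx
        rcases hx with rfl | rfl <;> simp [hL3, hL2])
      have hα1 : (1:ℕ) ≤ α.length := by
        rcases α with _ | ⟨a, t⟩; · simp at hane
        · simp
      have hs1 : (1:ℕ) ≤ hs.length := le_trans hα1 hlena
      refine ⟨L4, ?_, hv4, by simp [hL4], ?_, ?_⟩
      · calc L <+: L1 := hpre1
          _ <+: L2 := List.prefix_append _ _
          _ <+: L3 := List.prefix_append _ _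
          _ <+: L4 := List.prefix_append _ _
      · have h4 : L4.length - 1 = L3.length := by simp [hL4]
        rw [h4, hL4, val_concat_mul]
        have e1 : val g L3 L1.length = ((α.map (val g L)).prod)⁻¹ := by
          rw [val_stable g (List.prefix_append _ _) (by simp [hL2]),
            hL2, val_concat_inv, hval1]
        have e2 : val g L3 L2.length = g j := val_concat_gen g L2 j
        rw [e1, e2]
        simp
      · simp [hL4, hL3, hL2, hlen1]
        omega
    · -- z = A⁻¹ * B * g j, with α.length + β.length + 1 ≤ 2 * hs.length
      have hsum : α.length + β.length + 1 ≤ 2 * hs.length := by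
        rcases hgood with h | h | h
        · exact absurd h hane
        · exact absurd h hbne
        · exact h
      obtain ⟨L1, rA, hpre1, hv1, hlen1, hrA, hvalA⟩ := build_prod g hL hmema hane
      set L2 := L1 ++ [GEntry.inv rA] with hL2
      have hv2 : ValidSLP L2 := valid_concat hv1 (by simpa [GEntry.refs])
      have hmemb2 : ∀ k ∈ β, k < L2.length := by
        intro k hk
        have := hmemb k hk
        have := hpre1.length_le
        simp [hL2]; omega
      obtain ⟨L3, rB, hpre3, hv3, hlen3, hrB, hvalB⟩ := build_prod g hv2 hmemb2 hbne
      set L4 := L3 ++ [GEntry.mul L1.length rB] with hL4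
      have hv4 : ValidSLP L4 := valid_concat hv3 (by
        intro x hx; simp [GEntry.refs] at hx
        have hl12 : L1.length < L2.length := by simp [hL2]
        have hl23 : L2.length ≤ L3.length := hpre3.length_le
        rcases hx with rfl | rfl
        · omega
        · exact hrB)
      set L5 := L4 ++ [GEntry.gen j] with hL5
      have hv5 : ValidSLP L5 := valid_concat hv4 (by simp [GEntry.refs])
      set L6 := L5 ++ [GEntry.mul L3.length L4.length] with hL6
      have hv6 : ValidSLP L6 := valid_concat hv5 (by
        intro x hx; simp [GEntry.refs] at hx
        rcases hx with rfl | rfl <;> simp [hL5, hL4])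
      have hpre24 : L2 <+: L4 := hpre3.trans (List.prefix_append _ _)
      have hpre25 : L2 <+: L5 := hpre24.trans (List.prefix_append _ _)
      refine ⟨L6, ?_, hv6, by simp [hL6], ?_, ?_⟩
      · calc L <+: L1 := hpre1
          _ <+: L2 := List.prefix_append _ _
          _ <+: L5 := hpre25
          _ <+: L6 := List.prefix_append _ _
      · have h6 : L6.length - 1 = L5.length := by simp [hL6]
        rw [h6, hL6, val_concat_mul]
        have eA : val g L5 L3.length = ((α.map (val g L)).prod)⁻¹ * (β.map (val g L)).prod := by
          rw [val_stable g (List.prefix_append _ _ : L4 <+: L5) (by simp [hL4]),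
            hL4, val_concat_mul]
          have e1 : val g L3 L1.length = ((α.map (val g L)).prod)⁻¹ := by
            rw [val_stable g hpre3 (by simp [hL2]), hL2, val_concat_inv, hvalA]
          have e2 : val g L3 rB = (β.map (val g L)).prod := by
            rw [hvalB, map_val_stable g (List.prefix_append _ _ : L1 <+: L2)
              (fun k hk => lt_of_lt_of_le (hmemb k hk) hpre1.length_le),
              map_val_stable g hpre1 hmemb]
          rw [e1, e2]
        have eg : val g L5 L4.length = g j := val_concat_gen g L4 j
        rw [eA, eg]
      · have : L6.length = L3.length + 3 := by simp [hL6, hL5, hL4]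
        have : L3.length = L2.length + (β.length - 1) := hlen3
        have : L2.length = L1.length + 1 := by simp [hL2]
        have hb1 : (1:ℕ) ≤ β.length := by
          rcases β with _ | _; · simp at hbne
          · simp
        have ha1 : (1:ℕ) ≤ α.length := by
          rcases α with _ | _; · simp at hane
          · simp
        simp [hL6, hL5, hL4, hlen3, hL2, hlen1]
        omega

end Reach

namespace Reach
open List Pointwise

variable {G : Type} [Group G] {m : ℕ} (g : Fin m → G)

lemma getLast?_runSLP_concat (X : List (GEntry m)) (e : GEntry m) :
    (runSLP g (X ++ [e])).getLast? = some (val g (X ++ [e]) X.length) := by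
  rw [runSLP_concat, List.getLast?_concat, val_concat]

/-- From membership of `h` in `K⁻¹ * K` for the cube `K`, produce the final
program. -/
lemma finish [DecidableEq G] {L : List (GEntry m)} (hL : ValidSLP L) {hs : List ℕ}
    (hhs : ∀ k ∈ hs, k < L.length) (hcost : L.length ≤ hs.length ^ 2)
    {h : G} (hmem : h ∈ (cube (hs.map (val g L)))⁻¹ * cube (hs.map (val g L))) :
    ∃ Lf : List (GEntry m), Lf ≠ [] ∧ ValidSLP Lf ∧
      (runSLP g Lf).getLast? = some h ∧
      Lf.length ≤ hs.length ^ 2 + 2 * hs.length + 1 := by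
  obtain ⟨y, hy, b, hbK, hyb⟩ := Finset.mem_mul.mp hmem
  obtain ⟨aa, haaK, rfl⟩ := Finset.mem_inv.mp hy
  obtain ⟨sa, hsa, hsaprod⟩ := mem_cube_iff.mp haaK
  obtain ⟨sb, hsb, hsbprod⟩ := mem_cube_iff.mp hbK
  obtain ⟨α0, hα0, rfl⟩ := List.sublist_map_iff.mp hsa
  obtain ⟨β0, hβ0, rfl⟩ := List.sublist_map_iff.mp hsb
  obtain ⟨α, β, hα, hβ, heq, hdisj⟩ := cancel (val g L) hs α0 β0 hα0 hβ0
  have hh : ((α.map (val g L)).prod)⁻¹ * (β.map (val g L)).prod = h := by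
    rw [← heq, hsaprod, hsbprod, hyb]
  have hmema : ∀ k ∈ α, k < L.length := fun k hk => hhs k (hα.subset hk)
  have hmemb : ∀ k ∈ β, k < L.length := fun k hk => hhs k (hβ.subset hk)
  have hlena := hα.length_le
  have hlenb := hβ.length_le
  rcases eq_or_ne α [] with rfl | hane
  · rcases eq_or_ne β [] with rfl | hbne
    · -- h = 1
      refine ⟨L ++ [GEntry.one], by simp, valid_concat hL (by simp [GEntry.refs]),
        ?_, by simp; omega⟩
      rw [getLast?_runSLP_concat, val_concat_one]
      simp at hh
      rw [hh]
    · -- h = B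
      have hs1 : (1:ℕ) ≤ hs.length := le_trans (by
        rcases β with _ | _; · simp at hbne
        · simp) hlenb
      obtain ⟨L1, r, hpre1, hv1, hlen1, hr1, hval1⟩ := build_prod g hL hmemb hbne
      set L2 := L1 ++ [GEntry.inv r] with hL2
      have hv2 : ValidSLP L2 := valid_concat hv1 (by simpa [GEntry.refs])
      set L3 := L2 ++ [GEntry.inv L1.length] with hL3
      have hv3 : ValidSLP L3 := valid_concat hv2 (by simp [GEntry.refs, hL2])
      refine ⟨L3, by simp [hL3], hv3, ?_, ?_⟩
      · rw [hL3, getLast?_runSLP_concat, val_concat_inv]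
        have e2 : val g L2 L1.length = ((β.map (val g L)).prod)⁻¹ := by
          rw [hL2, val_concat_inv, hval1]
        rw [e2, inv_inv, ← hh]
        simp
      · simp [hL3, hL2, hlen1]
        omega
  · rcases eq_or_ne β [] with rfl | hbne
    · -- h = A⁻¹
      have hs1 : (1:ℕ) ≤ hs.length := le_trans (by
        rcases α with _ | _; · simp at hane
        · simp) hlena
      obtain ⟨L1, r, hpre1, hv1, hlen1, hr1, hval1⟩ := build_prod g hL hmema hane
      set L2 := L1 ++ [GEntry.inv r] with hL2
      have hv2 : ValidSLP L2 := valid_concat hv1 (by simpa [GEntry.refs])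
      refine ⟨L2, by simp [hL2], hv2, ?_, ?_⟩
      · rw [hL2, getLast?_runSLP_concat, val_concat_inv, hval1, ← hh]
        simp
      · simp [hL2, hlen1]
        omega
    · -- h = A⁻¹ * B
      have hsum : α.length + β.length + 1 ≤ 2 * hs.length := by
        rcases hdisj with hcon | hcon | hcon
        · exact absurd hcon hane
        · exact absurd hcon hbne
        · exact hcon
      obtain ⟨La, rA, hpreA, hvA, hlenA, hrA, hvalA⟩ := build_prod g hL hmema hane
      set Lb := La ++ [GEntry.inv rA] with hLb
      have hvb : ValidSLP Lb := valid_concat hvA (by simpa [GEntry.refs])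
      have hmemb2 : ∀ k ∈ β, k < Lb.length := by
        intro k hk
        have := hmemb k hk
        have := hpreA.length_le
        simp [hLb]; omega
      obtain ⟨Lc, rB, hpreC, hvC, hlenC, hrB, hvalB⟩ := build_prod g hvb hmemb2 hbne
      set L1 := Lc ++ [GEntry.mul La.length rB] with hL1
      have hv1 : ValidSLP L1 := valid_concat hvC (by
        intro x hx; simp [GEntry.refs] at hx
        have h1 : La.length < Lb.length := by simp [hLb]
        have h2 : Lb.length ≤ Lc.length := hpreC.length_le
        rcases hx with rfl | rfl
        · omega
        · exact hrB)
      have hvalh : val g L1 Lc.length = h := by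
        rw [hL1, val_concat_mul]
        have e1 : val g Lc La.length = ((α.map (val g L)).prod)⁻¹ := by
          rw [val_stable g hpreC (by simp [hLb]), hLb, val_concat_inv, hvalA]
        have e2 : val g Lc rB = (β.map (val g L)).prod := by
          rw [hvalB, map_val_stable g (List.prefix_append _ _ : La <+: Lb)
            (fun k hk => lt_of_lt_of_le (hmemb k hk) hpreA.length_le),
            map_val_stable g hpreA hmemb]
        rw [e1, e2, hh]
      set L2 := L1 ++ [GEntry.inv Lc.length] with hL2
      have hv2 : ValidSLP L2 := valid_concat hv1 (by simp [GEntry.refs, hL1])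
      set L3 := L2 ++ [GEntry.inv L1.length] with hL3
      have hv3 : ValidSLP L3 := valid_concat hv2 (by simp [GEntry.refs, hL2])
      refine ⟨L3, by simp [hL3], hv3, ?_, ?_⟩
      · rw [hL3, getLast?_runSLP_concat, val_concat_inv]
        have e2 : val g L2 L1.length = h⁻¹ := by
          rw [hL2, val_concat_inv, hvalh]
        rw [e2, inv_inv]
      · have ha1 : (1:ℕ) ≤ α.length := by
          rcases α with _ | _; · simp at hane
          · simp
        have hb1 : (1:ℕ) ≤ β.length := by
          rcases β with _ | _; · simp at hbne
          · simp
        simp [hL3, hL2, hL1, hlenC, hLb, hlenA]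
        omega

end Reach

namespace Reach
open List Pointwise

variable {G : Type} [Group G] {m : ℕ} (g : Fin m → G)

lemma loop [Fintype G] [DecidableEq G]
    (hgen : Subgroup.closure (Set.range g) = ⊤) :
    ∀ (fuel : ℕ) (L : List (GEntry m)) (hs : List ℕ),
      Nat.card G ≤ fuel + hs.length →
      ValidSLP L → (∀ k ∈ hs, k < L.length) →
      L.length ≤ hs.length ^ 2 →
      2 ^ hs.length ≤ (cube (hs.map (val g L))).card →
      ∃ (L' : List (GEntry m)) (hs' : List ℕ),
        ValidSLP L' ∧ (∀ k ∈ hs', k < L'.length) ∧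
        L'.length ≤ hs'.length ^ 2 ∧
        (2 : ℕ) ^ hs'.length ≤ (cube (hs'.map (val g L'))).card ∧
        ∀ x : G, x ∈ (cube (hs'.map (val g L')))⁻¹ * cube (hs'.map (val g L')) := by
  intro fuel
  induction fuel with
  | zero =>
    intro L hs hfuel _ _ _ hcard
    exfalso
    have h1 : hs.length < 2 ^ hs.length := Nat.lt_two_pow_self
    have h2 : (cube (hs.map (val g L))).card ≤ Nat.card G := by
      rw [Nat.card_eq_fintype_card]
      exact Finset.card_le_univ _
    omega
  | succ fuel ih =>
    intro L hs hfuel hL hhs hcost hcard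
    by_cases hdone : ∀ x : G, x ∈ (cube (hs.map (val g L)))⁻¹ * cube (hs.map (val g L))
    · exact ⟨L, hs, hL, hhs, hcost, hcard, hdone⟩
    · -- there is a witness d ∈ K⁻¹K with d * g j ∉ K⁻¹K
      have hwit : ¬ ∀ (j : Fin m), ∀ d ∈ (cube (hs.map (val g L)))⁻¹ * cube (hs.map (val g L)),
          d * g j ∈ (cube (hs.map (val g L)))⁻¹ * cube (hs.map (val g L)) := by
        intro hcl
        exact hdone (quot_univ g hgen (one_mem_cube _) hcl)
      push_neg at hwit
      obtain ⟨j, d, hd, hz⟩ := hwit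
      obtain ⟨y, hy, b, hbK, hyb⟩ := Finset.mem_mul.mp hd
      obtain ⟨aa, haaK, rfl⟩ := Finset.mem_inv.mp hy
      obtain ⟨sa, hsa, hsaprod⟩ := mem_cube_iff.mp haaK
      obtain ⟨sb, hsb, hsbprod⟩ := mem_cube_iff.mp hbK
      obtain ⟨α0, hα0, rfl⟩ := List.sublist_map_iff.mp hsa
      obtain ⟨β0, hβ0, rfl⟩ := List.sublist_map_iff.mp hsb
      obtain ⟨α, β, hα, hβ, heq, hdisj⟩ := cancel (val g L) hs α0 β0 hα0 hβ0
      obtain ⟨L', hpre, hL', hne, hval, hlen⟩ :=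
        build_witness g hL hhs hα hβ j hdisj
      have hzval : val g L' (L'.length - 1) = d * g j := by
        rw [hval, ← heq, hsaprod, hsbprod, hyb]
      set p := L'.length - 1 with hp
      have hppos : p < L'.length := by
        have : L' ≠ [] := hne
        have : 0 < L'.length := List.length_pos_iff.mpr this
        omega
      -- new cube values
      have hmapstable : hs.map (val g L') = hs.map (val g L) :=
        map_val_stable g hpre hhs
      have hnewmap : (hs ++ [p]).map (val g L') = hs.map (val g L) ++ [d * g j] := by
        rw [List.map_append, hmapstable]
        simp [hzval]
      have hcard' : 2 ^ (hs ++ [p]).length ≤ (cube ((hs ++ [p]).map (val g L'))).card := by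
        rw [hnewmap]
        have := cube_double (l := hs.map (val g L)) (z := d * g j) hz
        calc 2 ^ (hs ++ [p]).length = 2 * 2 ^ hs.length := by
              simp [pow_succ]; ring
          _ ≤ 2 * (cube (hs.map (val g L))).card := by omega
          _ ≤ _ := this
      refine ih L' (hs ++ [p]) ?_ hL' ?_ ?_ hcard'
      · have : (hs ++ [p]).length = hs.length + 1 := by simp
        omega
      · intro k hk
        simp at hk
        rcases hk with hk | rfl
        · exact lt_of_lt_of_le (hhs k hk) hpre.length_le
        · exact hppos
      · have : (hs ++ [p]).length = hs.length + 1 := by simp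
        rw [this]
        have hexp : (hs.length + 1) ^ 2 = hs.length ^ 2 + 2 * hs.length + 1 := by ring
        omega

end Reach


/-- **Reachability Lemma (Babai–Szemerédi).**  If a finite group `G` is
generated by `g 0, …, g (m-1)`, then every element of `G` is computed from the
generators by a (nonempty, valid) straight-line program of length at most
`(1 + log₂ |G|)²`. -/
theorem reachability_lemma {G : Type} [Group G] [Finite G] {m : ℕ}
    (g : Fin m → G) (hgen : Subgroup.closure (Set.range g) = ⊤) :
    ∀ h : G, ∃ L : List (GEntry m), L ≠ [] ∧ ValidSLP L ∧
      (runSLP g L).getLast? = some h ∧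
      (L.length : ℝ) ≤ (1 + Real.logb 2 (Nat.card G)) ^ 2 := by
  classical
  letI : Fintype G := Fintype.ofFinite G
  intro h
  have hvalid0 : ValidSLP ([] : List (GEntry m)) := by
    intro i hi
    simp at hi
  have hstart := Reach.loop g hgen (Nat.card G) [] [] (by simp) hvalid0
    (by simp) (by simp) (by simp [Reach.cube])
  obtain ⟨L', hs', hL', hhs', hcost', hcard', huniv⟩ := hstart
  obtain ⟨Lf, hne, hval, hlast, hlen⟩ :=
    Reach.finish g hL' hhs' hcost' (huniv h)
  refine ⟨Lf, hne, hval, hlast, ?_⟩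
  set s := hs'.length with hsdef
  have hcardG : (2:ℕ) ^ s ≤ Nat.card G := by
    have : (Reach.cube (hs'.map (Reach.val g L'))).card ≤ Nat.card G := by
      rw [Nat.card_eq_fintype_card]
      exact Finset.card_le_univ _
    omega
  have hn1 : 1 ≤ Nat.card G := Nat.card_pos
  have hslog : (s : ℝ) ≤ Real.logb 2 (Nat.card G) := by
    have h2 : ((2:ℕ):ℝ) ^ s ≤ ((Nat.card G : ℕ) : ℝ) := by
      exact_mod_cast hcardG
    calc (s : ℝ) = Real.logb 2 ((2:ℝ) ^ s) := by
          rw [Real.logb_pow]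
          simp [Real.logb_self_eq_one]
      _ ≤ Real.logb 2 (Nat.card G) := by
          apply Real.logb_le_logb_of_le (by norm_num : (1:ℝ) < 2) (by positivity)
          exact_mod_cast h2
  have hlogb0 : (0:ℝ) ≤ Real.logb 2 (Nat.card G) := by
    apply Real.logb_nonneg (by norm_num)
    exact_mod_cast hn1
  have hlenR : (Lf.length : ℝ) ≤ ((s : ℝ) + 1) ^ 2 := by
    have : (Lf.length : ℝ) ≤ ((s^2 + 2*s + 1 : ℕ) : ℝ) := by exact_mod_cast hlen
    calc (Lf.length : ℝ) ≤ ((s^2 + 2*s + 1 : ℕ) : ℝ) := this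
      _ = ((s:ℝ) + 1)^2 := by push_cast; ring
  calc (Lf.length : ℝ) ≤ ((s : ℝ) + 1) ^ 2 := hlenR
    _ ≤ (1 + Real.logb 2 (Nat.card G)) ^ 2 := by
        apply pow_le_pow_left₀ (by positivity)
        linarith
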